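/- If f : 2^U → ℝ is normalized, monotone, and submodular, then for every A ⊆ U, f(A) ≤ g(A) ≤ (c e^c/(e^c−1)) · H_{|A|} · f(A), where g(A) = ∑_{B ⊆ A} m_{|A|−1,|B|−1} f(B). -/

import Mathlib

open MeasureTheory Real Finset

noncomputable def mcoef (c : ℝ) (a b : ℤ) : ℝ :=
  if a < 0 ∨ b < 0 then 0
  else ∫ p in (0:ℝ)..1,
    (c * Real.exp (c * p) / (Real.exp c - 1)) * p ^ b.toNat * (1 - p) ^ (a - b).toNat

noncomputable def harm (k : ℕ) : ℝ := ∑ t ∈ Finset.range k, (1 : ℝ) / (t + 1)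

noncomputable def gfun (c : ℝ) {U : Type*} [DecidableEq U] (f : Finset U → ℝ)
    (A : Finset U) : ℝ :=
  ∑ B ∈ A.powerset, mcoef c ((A.card : ℤ) - 1) ((B.card : ℤ) - 1) * f B

private lemma sum_bern' {U : Type*} [DecidableEq U] (A : Finset U) (p : ℝ) :
    ∑ B ∈ A.powerset, p ^ B.card * (1 - p) ^ (A.card - B.card) = 1 := by
  induction A using Finset.induction_on with
  | empty => simp
  | @insert x A' hx ih =>
    rw [Finset.sum_powerset_insert hx, Finset.card_insert_of_notMem hx]
    have h1 : ∑ B ∈ A'.powerset, p ^ B.card * (1 - p) ^ (A'.card + 1 - B.card)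
        = (1 - p) * ∑ B ∈ A'.powerset, p ^ B.card * (1 - p) ^ (A'.card - B.card) := by
      rw [Finset.mul_sum]
      refine Finset.sum_congr rfl fun B hB => ?_
      have hcard : B.card ≤ A'.card := Finset.card_le_card (Finset.mem_powerset.mp hB)
      have he : A'.card + 1 - B.card = (A'.card - B.card) + 1 := by omega
      rw [he, pow_succ]; ring
    have h2 : ∑ B ∈ A'.powerset, p ^ (insert x B).card * (1 - p) ^ (A'.card + 1 - (insert x B).card)
        = p * ∑ B ∈ A'.powerset, p ^ B.card * (1 - p) ^ (A'.card - B.card) := by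
      rw [Finset.mul_sum]
      refine Finset.sum_congr rfl fun B hB => ?_
      have hxB : x ∉ B := fun h => hx (Finset.mem_powerset.mp hB h)
      have hcard : B.card ≤ A'.card := Finset.card_le_card (Finset.mem_powerset.mp hB)
      rw [Finset.card_insert_of_notMem hxB]
      have he : A'.card + 1 - (B.card + 1) = A'.card - B.card := by omega
      rw [he, pow_succ]; ring
    rw [h1, h2, ih]; ring

private lemma multilinear_ge' {U : Type*} [DecidableEq U] (p : ℝ) (hp0 : 0 ≤ p) (hp1 : p ≤ 1)
    (A : Finset U) :
    ∀ f : Finset U → ℝ, (∀ S T, f S + f T ≥ f (S ∪ T) + f (S ∩ T)) →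
    p * f A + (1 - p) * f ∅ ≤ ∑ B ∈ A.powerset, p ^ B.card * (1 - p) ^ (A.card - B.card) * f B := by
  induction A using Finset.induction_on with
  | empty =>
    intro f _
    simp only [Finset.powerset_empty, Finset.sum_singleton, Finset.card_empty, pow_zero,
      Nat.sub_zero, one_mul]
    nlinarith [le_refl (f (∅ : Finset U))]
  | @insert x A' hx ih =>
    intro f hsub
    have hsubx : ∀ S T, (fun B => f (insert x B)) S + (fun B => f (insert x B)) T
        ≥ (fun B => f (insert x B)) (S ∪ T) + (fun B => f (insert x B)) (S ∩ T) := by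
      intro S T
      have h := hsub (insert x S) (insert x T)
      rw [← Finset.insert_union_distrib, ← Finset.insert_inter_distrib] at h
      exact h
    have H1 := ih f hsub
    have H2 := ih (fun B => f (insert x B)) hsubx
    rw [Finset.sum_powerset_insert hx, Finset.card_insert_of_notMem hx]
    have h1 : ∑ B ∈ A'.powerset, p ^ B.card * (1 - p) ^ (A'.card + 1 - B.card) * f B
        = (1 - p) * ∑ B ∈ A'.powerset, p ^ B.card * (1 - p) ^ (A'.card - B.card) * f B := by
      rw [Finset.mul_sum]
      refine Finset.sum_congr rfl fun B hB => ?_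
      have hcard : B.card ≤ A'.card := Finset.card_le_card (Finset.mem_powerset.mp hB)
      have he : A'.card + 1 - B.card = (A'.card - B.card) + 1 := by omega
      rw [he, pow_succ]; ring
    have h2 : ∑ B ∈ A'.powerset, p ^ (insert x B).card * (1 - p) ^ (A'.card + 1 - (insert x B).card) * f (insert x B)
        = p * ∑ B ∈ A'.powerset, p ^ B.card * (1 - p) ^ (A'.card - B.card) * f (insert x B) := by
      rw [Finset.mul_sum]
      refine Finset.sum_congr rfl fun B hB => ?_
      have hxB : x ∉ B := fun h => hx (Finset.mem_powerset.mp hB h)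
      have hcard : B.card ≤ A'.card := Finset.card_le_card (Finset.mem_powerset.mp hB)
      rw [Finset.card_insert_of_notMem hxB]
      have he : A'.card + 1 - (B.card + 1) = A'.card - B.card := by omega
      rw [he, pow_succ]; ring
    rw [h1, h2]
    have h3 : f A' + f {x} ≥ f (insert x A') + f ∅ := by
      have h := hsub A' {x}
      rw [Finset.inter_singleton_of_notMem hx] at h
      have hu : A' ∪ {x} = insert x A' := by
        rw [Finset.union_comm, ← Finset.insert_eq]
      rwa [hu] at h
    have hq : (0:ℝ) ≤ 1 - p := by linarith
    have hix : (insert x (∅ : Finset U)) = {x} := rfl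
    rw [hix] at H2
    set SS1 := ∑ B ∈ A'.powerset, p ^ B.card * (1 - p) ^ (A'.card - B.card) * f B with hSS1
    set SS2 := ∑ B ∈ A'.powerset, p ^ B.card * (1 - p) ^ (A'.card - B.card) * f (insert x B) with hSS2
    have e1 : (1 - p) * (p * f A' + (1 - p) * f ∅) ≤ (1 - p) * SS1 :=
      mul_le_mul_of_nonneg_left H1 hq
    have e2 : p * (p * f (insert x A') + (1 - p) * f {x}) ≤ p * SS2 :=
      mul_le_mul_of_nonneg_left H2 hp0
    have e3 : (p * (1 - p)) * (f (insert x A') + f ∅) ≤ (p * (1 - p)) * (f A' + f {x}) :=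
      mul_le_mul_of_nonneg_left h3 (mul_nonneg hp0 hq)
    nlinarith [e1, e2, e3]

private lemma G_ge {U : Type*} [DecidableEq U] (p : ℝ) (hp0 : 0 ≤ p) (hp1 : p ≤ 1)
    (f : Finset U → ℝ) (hnorm : f ∅ = 0)
    (hsub : ∀ S T, f S + f T ≥ f (S ∪ T) + f (S ∩ T)) (A : Finset U) :
    f A ≤ ∑ B ∈ A.powerset,
      (if B = ∅ then 0 else p ^ (B.card - 1) * (1 - p) ^ (A.card - B.card)) * f B := by
  induction A using Finset.induction_on with
  | empty => simp [hnorm]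
  | @insert x A' hx ih =>
    rw [Finset.sum_powerset_insert hx, Finset.card_insert_of_notMem hx]
    have h1 : ∑ B ∈ A'.powerset,
          (if B = ∅ then 0 else p ^ (B.card - 1) * (1 - p) ^ (A'.card + 1 - B.card)) * f B
        = (1 - p) * ∑ B ∈ A'.powerset,
          (if B = ∅ then 0 else p ^ (B.card - 1) * (1 - p) ^ (A'.card - B.card)) * f B := by
      rw [Finset.mul_sum]
      refine Finset.sum_congr rfl fun B hB => ?_
      by_cases hBe : B = ∅
      · simp [hBe]
      · have hcard : B.card ≤ A'.card := Finset.card_le_card (Finset.mem_powerset.mp hB)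
        have he : A'.card + 1 - B.card = (A'.card - B.card) + 1 := by omega
        rw [if_neg hBe, if_neg hBe, he, pow_succ]; ring
    have h2 : ∑ B ∈ A'.powerset,
          (if insert x B = ∅ then 0
            else p ^ ((insert x B).card - 1) * (1 - p) ^ (A'.card + 1 - (insert x B).card))
            * f (insert x B)
        = ∑ B ∈ A'.powerset, p ^ B.card * (1 - p) ^ (A'.card - B.card) * f (insert x B) := by
      refine Finset.sum_congr rfl fun B hB => ?_
      have hxB : x ∉ B := fun h => hx (Finset.mem_powerset.mp hB h)
      have hcard : B.card ≤ A'.card := Finset.card_le_card (Finset.mem_powerset.mp hB)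
      rw [if_neg (Finset.insert_ne_empty x B), Finset.card_insert_of_notMem hxB]
      have he : A'.card + 1 - (B.card + 1) = A'.card - B.card := by omega
      have he2 : B.card + 1 - 1 = B.card := by omega
      rw [he, he2]
    rw [h1, h2]
    have hsubx : ∀ S T, (fun B => f (insert x B)) S + (fun B => f (insert x B)) T
        ≥ (fun B => f (insert x B)) (S ∪ T) + (fun B => f (insert x B)) (S ∩ T) := by
      intro S T
      have h := hsub (insert x S) (insert x T)
      rw [← Finset.insert_union_distrib, ← Finset.insert_inter_distrib] at h
      exact h
    have H2 := multilinear_ge' p hp0 hp1 A' (fun B => f (insert x B)) hsubx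
    have hix : (insert x (∅ : Finset U)) = {x} := rfl
    rw [hix] at H2
    have h3 : f A' + f {x} ≥ f (insert x A') + f ∅ := by
      have h := hsub A' {x}
      rw [Finset.inter_singleton_of_notMem hx] at h
      have hu : A' ∪ {x} = insert x A' := by rw [Finset.union_comm, ← Finset.insert_eq]
      rwa [hu] at h
    have hq : (0:ℝ) ≤ 1 - p := by linarith
    have e1 : (1 - p) * f A' ≤ (1 - p) * ∑ B ∈ A'.powerset,
        (if B = ∅ then 0 else p ^ (B.card - 1) * (1 - p) ^ (A'.card - B.card)) * f B :=
      mul_le_mul_of_nonneg_left ih hq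
    have e3 : (1 - p) * (f (insert x A') + f ∅) ≤ (1 - p) * (f A' + f {x}) :=
      mul_le_mul_of_nonneg_left h3 hq
    nlinarith [e1, e3, H2]

private lemma T_eq {U : Type*} [DecidableEq U] (p : ℝ) (A : Finset U) :
    ∑ B ∈ A.powerset, (if B = ∅ then 0 else p ^ (B.card - 1) * (1 - p) ^ (A.card - B.card))
      = ∑ t ∈ Finset.range A.card, (1 - p) ^ t := by
  induction A using Finset.induction_on with
  | empty => simp
  | @insert x A' hx ih =>
    rw [Finset.sum_powerset_insert hx, Finset.card_insert_of_notMem hx]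
    have h1 : ∑ B ∈ A'.powerset,
          (if B = ∅ then 0 else p ^ (B.card - 1) * (1 - p) ^ (A'.card + 1 - B.card))
        = (1 - p) * ∑ B ∈ A'.powerset,
          (if B = ∅ then 0 else p ^ (B.card - 1) * (1 - p) ^ (A'.card - B.card)) := by
      rw [Finset.mul_sum]
      refine Finset.sum_congr rfl fun B hB => ?_
      by_cases hBe : B = ∅
      · simp [hBe]
      · have hcard : B.card ≤ A'.card := Finset.card_le_card (Finset.mem_powerset.mp hB)
        have he : A'.card + 1 - B.card = (A'.card - B.card) + 1 := by omega
        rw [if_neg hBe, if_neg hBe, he, pow_succ]; ring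
    have h2 : ∑ B ∈ A'.powerset,
          (if insert x B = ∅ then 0
            else p ^ ((insert x B).card - 1) * (1 - p) ^ (A'.card + 1 - (insert x B).card))
        = 1 := by
      refine Eq.trans (Finset.sum_congr rfl fun B hB => ?_) (sum_bern' A' p)
      have hxB : x ∉ B := fun h => hx (Finset.mem_powerset.mp hB h)
      have hcard : B.card ≤ A'.card := Finset.card_le_card (Finset.mem_powerset.mp hB)
      rw [if_neg (Finset.insert_ne_empty x B), Finset.card_insert_of_notMem hxB]
      have he : A'.card + 1 - (B.card + 1) = A'.card - B.card := by omega
      have he2 : B.card + 1 - 1 = B.card := by omega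
      rw [he, he2]
    rw [h1, h2, ih, Finset.sum_range_succ', pow_zero, Finset.mul_sum]
    simp only [pow_succ]
    congr 1
    exact Finset.sum_congr rfl fun t _ => by ring

private lemma cont_w (c : ℝ) :
    Continuous (fun p : ℝ => c * Real.exp (c * p) / (Real.exp c - 1)) := by
  apply Continuous.div_const
  fun_prop

private lemma integral_w (c : ℝ) (hc : 0 < c) :
    ∫ p in (0:ℝ)..1, c * Real.exp (c * p) / (Real.exp c - 1) = 1 := by
  have hE : Real.exp c - 1 > 0 := by
    have := Real.add_one_lt_exp (x := c) hc.ne'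
    linarith
  have hd : ∀ p ∈ Set.uIcc (0:ℝ) 1,
      HasDerivAt (fun q : ℝ => Real.exp (c * q) / (Real.exp c - 1))
        (c * Real.exp (c * p) / (Real.exp c - 1)) p := by
    intro p _
    have h1 : HasDerivAt (fun q : ℝ => c * q) c p := by
      simpa using (hasDerivAt_id p).const_mul c
    have h2 : HasDerivAt (fun q : ℝ => Real.exp (c * q)) (Real.exp (c * p) * c) p :=
      (Real.hasDerivAt_exp (c * p)).comp p h1
    have h3 := h2.div_const (Real.exp c - 1)
    rw [show c * Real.exp (c * p) / (Real.exp c - 1) = Real.exp (c * p) * c / (Real.exp c - 1) by ring]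
    exact h3
  rw [intervalIntegral.integral_eq_sub_of_hasDerivAt hd ((cont_w c).intervalIntegrable 0 1)]
  rw [mul_one, mul_zero, Real.exp_zero]
  field_simp

private lemma integral_one_sub_pow (t : ℕ) :
    ∫ p in (0:ℝ)..1, (1 - p) ^ t = 1 / (t + 1) := by
  have h := intervalIntegral.integral_comp_sub_left (a := (0:ℝ)) (b := 1) (fun x => x ^ t) 1
  simp only [sub_self, sub_zero] at h
  rw [h, integral_pow]
  simp

private noncomputable def phifun (c : ℝ) {U : Type*} [DecidableEq U] (A B : Finset U)
    (p : ℝ) : ℝ :=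
  (c * Real.exp (c * p) / (Real.exp c - 1)) *
    (if B = ∅ then 0 else p ^ (B.card - 1) * (1 - p) ^ (A.card - B.card))

private lemma phifun_cont (c : ℝ) {U : Type*} [DecidableEq U] (A B : Finset U) :
    Continuous (phifun c A B) := by
  by_cases hB : B = ∅
  · have h : phifun c A B = fun _ => (0:ℝ) := by
      funext p; simp [phifun, hB]
    rw [h]; exact continuous_const
  · have h : phifun c A B = fun p => (c * Real.exp (c * p) / (Real.exp c - 1)) *
        (p ^ (B.card - 1) * (1 - p) ^ (A.card - B.card)) := by
      funext p; simp [phifun, hB]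
    rw [h]
    exact (cont_w c).mul ((continuous_pow _).mul ((continuous_const.sub continuous_id).pow _))

private lemma mcoef_eq (c : ℝ) {U : Type*} [DecidableEq U] (A B : Finset U) (hBA : B ⊆ A) :
    mcoef c ((A.card : ℤ) - 1) ((B.card : ℤ) - 1) = ∫ p in (0:ℝ)..1, phifun c A B p := by
  by_cases hB : B = ∅
  · subst hB
    rw [mcoef, if_pos (Or.inr (by simp))]
    simp [phifun]
  · have hb1 : 1 ≤ B.card := Finset.card_pos.mpr (Finset.nonempty_of_ne_empty hB)
    have hab : B.card ≤ A.card := Finset.card_le_card hBA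
    rw [mcoef, if_neg (by omega)]
    have e1 : (((B.card : ℤ) - 1)).toNat = B.card - 1 := by omega
    have e2 : ((((A.card : ℤ) - 1) - ((B.card : ℤ) - 1))).toNat = A.card - B.card := by omega
    rw [e1, e2]
    refine intervalIntegral.integral_congr fun p _ => ?_
    simp only [phifun, if_neg hB]
    ring

theorem stmt_9 (c : ℝ) (hc0 : 0 < c) (hc1 : c ≤ 1) {U : Type*} [Fintype U] [DecidableEq U]
    (f : Finset U → ℝ)
    (hnorm : f ∅ = 0)
    (hmono : ∀ A B : Finset U, A ⊆ B → f A ≤ f B)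
    (hsub : ∀ A B : Finset U, f A + f B ≥ f (A ∪ B) + f (A ∩ B))
    (A : Finset U) :
    f A ≤ gfun c f A ∧
      gfun c f A ≤ c * Real.exp c / (Real.exp c - 1) * harm A.card * f A := by
  have hE : (0:ℝ) < Real.exp c - 1 := by
    have := Real.add_one_lt_exp (x := c) hc0.ne'
    linarith
  have hw0 : ∀ p : ℝ, 0 ≤ c * Real.exp (c * p) / (Real.exp c - 1) := fun p =>
    div_nonneg (mul_nonneg hc0.le (Real.exp_pos _).le) hE.le
  have hfA0 : 0 ≤ f A := hnorm ▸ hmono ∅ A (Finset.empty_subset A)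
  have hC0 : 0 ≤ c * Real.exp c / (Real.exp c - 1) :=
    div_nonneg (mul_nonneg hc0.le (Real.exp_pos _).le) hE.le
  -- gfun as an integral
  have hint : ∀ B : Finset U, IntervalIntegrable (fun p => phifun c A B p * f B)
      MeasureTheory.volume 0 1 :=
    fun B => ((phifun_cont c A B).mul continuous_const).intervalIntegrable 0 1
  have hgf : gfun c f A = ∫ p in (0:ℝ)..1, ∑ B ∈ A.powerset, phifun c A B p * f B := by
    rw [gfun, intervalIntegral.integral_finset_sum (fun B _ => hint B)]
    refine Finset.sum_congr rfl fun B hB => ?_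
    rw [mcoef_eq c A B (Finset.mem_powerset.mp hB), ← intervalIntegral.integral_mul_const]
  have hintsum : IntervalIntegrable (fun p => ∑ B ∈ A.powerset, phifun c A B p * f B)
      MeasureTheory.volume 0 1 :=
    (continuous_finset_sum _ fun B _ => (phifun_cont c A B).mul continuous_const).intervalIntegrable 0 1
  -- pointwise rewriting
  have hfactor : ∀ p : ℝ, ∑ B ∈ A.powerset, phifun c A B p * f B
      = (c * Real.exp (c * p) / (Real.exp c - 1)) * ∑ B ∈ A.powerset,
        (if B = ∅ then 0 else p ^ (B.card - 1) * (1 - p) ^ (A.card - B.card)) * f B := by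
    intro p
    rw [Finset.mul_sum]
    exact Finset.sum_congr rfl fun B _ => by rw [phifun, mul_assoc]
  constructor
  · -- lower bound
    have hlow : ∀ p ∈ Set.Icc (0:ℝ) 1,
        (c * Real.exp (c * p) / (Real.exp c - 1)) * f A
          ≤ ∑ B ∈ A.powerset, phifun c A B p * f B := by
      intro p hp
      rw [hfactor p]
      exact mul_le_mul_of_nonneg_left
        (G_ge p hp.1 hp.2 f hnorm (fun S T => hsub S T) A) (hw0 p)
    have h0 : f A = ∫ p in (0:ℝ)..1, (c * Real.exp (c * p) / (Real.exp c - 1)) * f A := by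
      rw [intervalIntegral.integral_mul_const, integral_w c hc0, one_mul]
    rw [hgf, h0]
    exact intervalIntegral.integral_mono_on zero_le_one
      (((cont_w c).mul continuous_const).intervalIntegrable 0 1) hintsum hlow
  · -- upper bound
    have hup : ∀ p ∈ Set.Icc (0:ℝ) 1,
        ∑ B ∈ A.powerset, phifun c A B p * f B
          ≤ (c * Real.exp c / (Real.exp c - 1) * f A) * ∑ t ∈ Finset.range A.card, (1 - p) ^ t := by
      intro p hp
      rw [hfactor p]
      have hΦ0 : ∀ B ∈ A.powerset,
          0 ≤ (if B = ∅ then (0:ℝ) else p ^ (B.card - 1) * (1 - p) ^ (A.card - B.card)) := by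
        intro B _
        by_cases hB : B = ∅
        · simp [hB]
        · rw [if_neg hB]
          exact mul_nonneg (pow_nonneg hp.1 _) (pow_nonneg (by linarith [hp.2]) _)
      have hX1 : ∑ B ∈ A.powerset,
          (if B = ∅ then (0:ℝ) else p ^ (B.card - 1) * (1 - p) ^ (A.card - B.card)) * f B
          ≤ (∑ t ∈ Finset.range A.card, (1 - p) ^ t) * f A := by
        rw [← T_eq p A, Finset.sum_mul]
        refine Finset.sum_le_sum fun B hB => ?_
        exact mul_le_mul_of_nonneg_left (hmono B A (Finset.mem_powerset.mp hB)) (hΦ0 B hB)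
      have hX0 : 0 ≤ ∑ B ∈ A.powerset,
          (if B = ∅ then (0:ℝ) else p ^ (B.card - 1) * (1 - p) ^ (A.card - B.card)) * f B := by
        refine Finset.sum_nonneg fun B hB => mul_nonneg (hΦ0 B hB) ?_
        exact hnorm ▸ hmono ∅ B (Finset.empty_subset B)
      have hwC : c * Real.exp (c * p) / (Real.exp c - 1) ≤ c * Real.exp c / (Real.exp c - 1) := by
        gcongr
        nlinarith [hp.2]
      calc (c * Real.exp (c * p) / (Real.exp c - 1)) * ∑ B ∈ A.powerset,
            (if B = ∅ then (0:ℝ) else p ^ (B.card - 1) * (1 - p) ^ (A.card - B.card)) * f B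
          ≤ (c * Real.exp c / (Real.exp c - 1)) *
            ((∑ t ∈ Finset.range A.card, (1 - p) ^ t) * f A) :=
            mul_le_mul hwC hX1 hX0 hC0
        _ = (c * Real.exp c / (Real.exp c - 1) * f A) * ∑ t ∈ Finset.range A.card, (1 - p) ^ t := by
            ring
    have hintup : IntervalIntegrable
        (fun p => (c * Real.exp c / (Real.exp c - 1) * f A) * ∑ t ∈ Finset.range A.card, (1 - p) ^ t)
        MeasureTheory.volume 0 1 :=
      (continuous_const.mul (continuous_finset_sum _ fun t _ => by fun_prop)).intervalIntegrable 0 1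
    have hval : (∫ p in (0:ℝ)..1,
        (c * Real.exp c / (Real.exp c - 1) * f A) * ∑ t ∈ Finset.range A.card, (1 - p) ^ t)
        = c * Real.exp c / (Real.exp c - 1) * harm A.card * f A := by
      rw [intervalIntegral.integral_const_mul]
      have : (∫ p in (0:ℝ)..1, ∑ t ∈ Finset.range A.card, (1 - p) ^ t) = harm A.card := by
        rw [intervalIntegral.integral_finset_sum
          (fun t _ => (by fun_prop : Continuous fun p : ℝ => (1 - p) ^ t).intervalIntegrable 0 1)]
        rw [harm]
        exact Finset.sum_congr rfl fun t _ => by rw [integral_one_sub_pow]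
      rw [this]; ring
    calc gfun c f A = ∫ p in (0:ℝ)..1, ∑ B ∈ A.powerset, phifun c A B p * f B := hgf
      _ ≤ ∫ p in (0:ℝ)..1,
          (c * Real.exp c / (Real.exp c - 1) * f A) * ∑ t ∈ Finset.range A.card, (1 - p) ^ t :=
          intervalIntegral.integral_mono_on zero_le_one hintsum hintup hup
      _ = c * Real.exp c / (Real.exp c - 1) * harm A.card * f A := hval
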